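/- Let p be an odd prime, a and b integers not divisible by p with p dividing a - b, and k a positive integer. Then the p-adic valuation of a^k - b^k equals the p-adic valuation of a - b plus the p-adic valuation of k. -/

import Mathlib

theorem lifting_the_exponent (p : ℕ) (hp : p.Prime) (hodd : Odd p)
    (a b : ℤ) (ha : ¬ (p : ℤ) ∣ a) (hb : ¬ (p : ℤ) ∣ b)
    (hab : (p : ℤ) ∣ a - b) (k : ℕ) (hk : 0 < k) :
    emultiplicity (p : ℤ) (a ^ k - b ^ k) =
      emultiplicity (p : ℤ) (a - b) + (padicValNat p k : ℕ∞) := by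
  haveI : Fact p.Prime := ⟨hp⟩
  rw [Int.emultiplicity_pow_sub_pow hp hodd hab ha k,
    ← padicValNat_eq_emultiplicity hk.ne']
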